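/- Let n ≥ 2 and define the Legendrian embryo model F : ℝ × ℝ^{n−1} → ℝⁿ × ℝⁿ × ℝ by x₁ = u³ + 3u‖v‖², (x₂,…,xₙ) = v, y₁ = (1/3)(u² + ‖v‖²), (y₂,…,yₙ) = 2u(‖v‖² − (1/3)u²)·v, z = u⁵/5 + (2/3)u³‖v‖² + u‖v‖⁴. Then F is injective, F satisfies the Legendrian condition Dz(p) = Σᵢ yᵢ(p)·Dxᵢ(p) at every point p, the derivative DF(u,v) is injective at every (u,v) ≠ (0,0), and at the origin the kernel of DF(0,0) is exactly ℝ·(1,0) (the ∂_u-direction), so the embryo is an isolated singular point at which DF has rank n − 1. -/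

import Mathlib

set_option maxHeartbeats 1000000
open ContinuousLinearMap
variable {V : Type*} [NormedAddCommGroup V] [InnerProductSpace ℝ V]

lemma emb_deriv (p : ℝ × V) :
    ∃ (Lx : (ℝ × V) →L[ℝ] ℝ) (Lz : (ℝ × V) →L[ℝ] ℝ)
      (L : (ℝ × V) →L[ℝ] (ℝ × V) × (ℝ × V) × ℝ),
      HasFDerivAt (fun p : ℝ × V => p.1 ^ 3 + 3 * p.1 * ‖p.2‖ ^ 2) Lx p ∧
      (∀ w : ℝ × V, Lx w = (3 * p.1 ^ 2 + 3 * ‖p.2‖ ^ 2) * w.1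
          + 6 * p.1 * (inner ℝ p.2 w.2 : ℝ)) ∧
      HasFDerivAt (fun p : ℝ × V =>
        p.1 ^ 5 / 5 + 2 / 3 * p.1 ^ 3 * ‖p.2‖ ^ 2 + p.1 * ‖p.2‖ ^ 4) Lz p ∧
      (∀ w : ℝ × V, Lz w = (p.1 ^ 4 + 2 * p.1 ^ 2 * ‖p.2‖ ^ 2 + ‖p.2‖ ^ 4) * w.1
          + (4 / 3 * p.1 ^ 3 + 4 * p.1 * ‖p.2‖ ^ 2) * (inner ℝ p.2 w.2 : ℝ)) ∧
      HasFDerivAt (fun p : ℝ × V =>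
        ((p.1 ^ 3 + 3 * p.1 * ‖p.2‖ ^ 2, p.2),
         ((1 / 3) * (p.1 ^ 2 + ‖p.2‖ ^ 2),
          (2 * p.1 * (‖p.2‖ ^ 2 - (1 / 3) * p.1 ^ 2)) • p.2),
         p.1 ^ 5 / 5 + 2 / 3 * p.1 ^ 3 * ‖p.2‖ ^ 2 + p.1 * ‖p.2‖ ^ 4)) L p ∧
      ∀ w : ℝ × V, L w =
        (((3 * p.1 ^ 2 + 3 * ‖p.2‖ ^ 2) * w.1 + 6 * p.1 * (inner ℝ p.2 w.2 : ℝ), w.2),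
         ((2 / 3 * p.1 * w.1 + 2 / 3 * (inner ℝ p.2 w.2 : ℝ),
           ((2 * ‖p.2‖ ^ 2 - 2 * p.1 ^ 2) * w.1 + 4 * p.1 * (inner ℝ p.2 w.2 : ℝ)) • p.2
             + (2 * p.1 * ‖p.2‖ ^ 2 - 2 / 3 * p.1 ^ 3) • w.2),
          (p.1 ^ 4 + 2 * p.1 ^ 2 * ‖p.2‖ ^ 2 + ‖p.2‖ ^ 4) * w.1
            + (4 / 3 * p.1 ^ 3 + 4 * p.1 * ‖p.2‖ ^ 2) * (inner ℝ p.2 w.2 : ℝ))) := by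
  have hu : HasFDerivAt (fun p : ℝ × V => p.1) (fst ℝ ℝ V) p := hasFDerivAt_fst
  have hv : HasFDerivAt (fun p : ℝ × V => p.2) (snd ℝ ℝ V) p := hasFDerivAt_snd
  have hq : HasFDerivAt (fun p : ℝ × V => ‖p.2‖ ^ 2)
      (2 • (innerSL ℝ p.2).comp (snd ℝ ℝ V)) p := hv.norm_sq
  have hu2 : HasFDerivAt (fun p : ℝ × V => p.1 ^ 2) ((2 * p.1) • fst ℝ ℝ V) p := by
    simpa [Function.comp_def] using (hasDerivAt_pow 2 p.1).comp_hasFDerivAt p hasFDerivAt_fst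
  have hu3 : HasFDerivAt (fun p : ℝ × V => p.1 ^ 3) ((3 * p.1 ^ 2) • fst ℝ ℝ V) p := by
    simpa [Function.comp_def] using (hasDerivAt_pow 3 p.1).comp_hasFDerivAt p hasFDerivAt_fst
  have hu5 : HasFDerivAt (fun p : ℝ × V => p.1 ^ 5) ((5 * p.1 ^ 4) • fst ℝ ℝ V) p := by
    simpa [Function.comp_def] using (hasDerivAt_pow 5 p.1).comp_hasFDerivAt p hasFDerivAt_fst
  have hq4 : HasFDerivAt (fun p : ℝ × V => ‖p.2‖ ^ 4)
      ((2 * ‖p.2‖ ^ 2) • (2 • (innerSL ℝ p.2).comp (snd ℝ ℝ V))) p := by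
    have := (hasDerivAt_pow 2 (‖p.2‖ ^ 2)).comp_hasFDerivAt p hq
    have h2 : ((fun x : ℝ => x ^ 2) ∘ fun p : ℝ × V => ‖p.2‖ ^ 2)
        = fun p : ℝ × V => ‖p.2‖ ^ 4 := by
      funext q; simp [Function.comp, ← pow_mul]
    rw [h2] at this; norm_num at this; exact this
  have hx1 := hu3.add ((hu.const_mul 3).mul hq)
  have hy1 := (hu2.add hq).const_mul (1/3 : ℝ)
  have hs := (hu.const_mul 2).mul (hq.sub (hu2.const_mul (1/3 : ℝ)))
  have hyr := hs.smul hv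
  have hz1 := hu5.const_mul (1/5 : ℝ)
  have he : (fun p : ℝ × V => 1/5 * p.1 ^ 5) = fun p : ℝ × V => p.1 ^ 5 / 5 := by
    funext q; ring
  rw [he] at hz1
  have hz := (hz1.add ((hu3.const_mul (2/3)).mul hq)).add (hu.mul hq4)
  refine ⟨_, _, _, hx1, fun w => ?_, hz, fun w => ?_,
    (hx1.prodMk hv).prodMk ((hy1.prodMk hyr).prodMk hz), fun w => ?_⟩
  · simp only [ContinuousLinearMap.add_apply, ContinuousLinearMap.coe_smul',
      ContinuousLinearMap.smul_apply, Pi.smul_apply, ContinuousLinearMap.coe_comp',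
      Function.comp_apply, ContinuousLinearMap.coe_fst', ContinuousLinearMap.coe_snd',
      innerSL_apply_apply, smul_eq_mul, nsmul_eq_mul, Nat.cast_ofNat]
    ring
  · simp only [ContinuousLinearMap.add_apply, ContinuousLinearMap.coe_smul',
      ContinuousLinearMap.smul_apply, Pi.smul_apply, ContinuousLinearMap.coe_comp',
      Function.comp_apply, ContinuousLinearMap.coe_fst', ContinuousLinearMap.coe_snd',
      innerSL_apply_apply, smul_eq_mul, nsmul_eq_mul, Nat.cast_ofNat]
    ring
  refine Prod.ext (Prod.ext ?_ rfl) (Prod.ext (Prod.ext ?_ ?_) ?_) <;>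
    simp only [ContinuousLinearMap.prod_apply, ContinuousLinearMap.add_apply,
      ContinuousLinearMap.coe_smul', ContinuousLinearMap.smul_apply, Pi.smul_apply,
      ContinuousLinearMap.coe_comp', Function.comp_apply, ContinuousLinearMap.coe_fst',
      ContinuousLinearMap.coe_snd', ContinuousLinearMap.smulRight_apply,
      ContinuousLinearMap.coe_sub', Pi.sub_apply, innerSL_apply_apply, smul_eq_mul,
      nsmul_eq_mul, Nat.cast_ofNat]
  · ring
  · ring
  · simp only [Function.comp_apply, Pi.mul_apply, Pi.ofNat_apply, innerSL_apply_apply, Pi.sub_apply]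
    module
  · ring

lemma emb_inj : Function.Injective (fun p : ℝ × V =>
    ((p.1 ^ 3 + 3 * p.1 * ‖p.2‖ ^ 2, p.2),
     ((1 / 3) * (p.1 ^ 2 + ‖p.2‖ ^ 2),
      (2 * p.1 * (‖p.2‖ ^ 2 - (1 / 3) * p.1 ^ 2)) • p.2),
     p.1 ^ 5 / 5 + 2 / 3 * p.1 ^ 3 * ‖p.2‖ ^ 2 + p.1 * ‖p.2‖ ^ 4)) := by
  intro p q h
  simp only [Prod.mk.injEq] at h
  obtain ⟨⟨h1, hv⟩, ⟨h2, -⟩, -⟩ := h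
  rw [hv] at h1 h2
  have hc : (0:ℝ) ≤ ‖q.2‖ ^ 2 := by positivity
  have hsq : p.1 ^ 2 = q.1 ^ 2 := by linarith
  have key : (p.1 - q.1) * (p.1 ^ 2 + p.1 * q.1 + q.1 ^ 2 + 3 * ‖q.2‖ ^ 2) = 0 := by
    linear_combination h1
  rcases mul_eq_zero.mp key with h | h
  · exact Prod.ext (by linarith) hv
  · have hp0 : p.1 ^ 2 = 0 := by nlinarith [sq_nonneg (p.1 + q.1)]
    have hq0 : q.1 ^ 2 = 0 := by linarith [hsq]
    have hP : p.1 = 0 := pow_eq_zero_iff two_ne_zero |>.mp hp0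
    have hQ : q.1 = 0 := pow_eq_zero_iff two_ne_zero |>.mp hq0
    exact Prod.ext (by rw [hP, hQ]) hv

lemma emb_leg (p w : ℝ × V) :
    fderiv ℝ (fun p : ℝ × V =>
        p.1 ^ 5 / 5 + 2 / 3 * p.1 ^ 3 * ‖p.2‖ ^ 2 + p.1 * ‖p.2‖ ^ 4) p w
      = (1 / 3) * (p.1 ^ 2 + ‖p.2‖ ^ 2)
          * fderiv ℝ (fun p : ℝ × V => p.1 ^ 3 + 3 * p.1 * ‖p.2‖ ^ 2) p w
        + (inner ℝ ((2 * p.1 * (‖p.2‖ ^ 2 - (1 / 3) * p.1 ^ 2)) • p.2) w.2 : ℝ) := by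
  obtain ⟨Lx, Lz, L, hx, hxw, hz, hzw, -, -⟩ := emb_deriv p
  rw [hz.fderiv, hx.fderiv, hzw, hxw, real_inner_smul_left]
  ring

lemma emb_imm (p : ℝ × V) (hp : p ≠ ((0 : ℝ), (0 : V))) :
    Function.Injective ⇑(fderiv ℝ (fun p : ℝ × V =>
      ((p.1 ^ 3 + 3 * p.1 * ‖p.2‖ ^ 2, p.2),
       ((1 / 3) * (p.1 ^ 2 + ‖p.2‖ ^ 2),
        (2 * p.1 * (‖p.2‖ ^ 2 - (1 / 3) * p.1 ^ 2)) • p.2),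
       p.1 ^ 5 / 5 + 2 / 3 * p.1 ^ 3 * ‖p.2‖ ^ 2 + p.1 * ‖p.2‖ ^ 4)) p) := by
  obtain ⟨-, -, L, -, -, -, -, hF, hLw⟩ := emb_deriv p
  rw [hF.fderiv]
  have hcoef : (3 * p.1 ^ 2 + 3 * ‖p.2‖ ^ 2) ≠ 0 := by
    intro h0
    apply hp
    have h1 : p.1 ^ 2 = 0 := by nlinarith [sq_nonneg p.1, sq_nonneg ‖p.2‖]
    have h2 : ‖p.2‖ ^ 2 = 0 := by nlinarith [sq_nonneg p.1, sq_nonneg ‖p.2‖]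
    exact Prod.ext (pow_eq_zero_iff two_ne_zero |>.mp h1)
      (norm_eq_zero.mp (pow_eq_zero_iff two_ne_zero |>.mp h2))
  intro a b hab
  have hw : L (a - b) = 0 := by rw [map_sub, hab, sub_self]
  rw [hLw] at hw
  simp only [Prod.ext_iff, Prod.fst_zero, Prod.snd_zero] at hw
  obtain ⟨⟨hA, hw2⟩, -⟩ := hw
  rw [hw2, inner_zero_right, mul_zero, add_zero, mul_eq_zero] at hA
  have h1 : (a - b).1 = 0 := hA.resolve_left hcoef
  apply sub_eq_zero.mp
  rw [Prod.ext_iff]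
  exact ⟨by simpa using h1, by simpa using hw2⟩

lemma emb_ker :
    {w : ℝ × V | fderiv ℝ (fun p : ℝ × V =>
      ((p.1 ^ 3 + 3 * p.1 * ‖p.2‖ ^ 2, p.2),
       ((1 / 3) * (p.1 ^ 2 + ‖p.2‖ ^ 2),
        (2 * p.1 * (‖p.2‖ ^ 2 - (1 / 3) * p.1 ^ 2)) • p.2),
       p.1 ^ 5 / 5 + 2 / 3 * p.1 ^ 3 * ‖p.2‖ ^ 2 + p.1 * ‖p.2‖ ^ 4))
      ((0 : ℝ), (0 : V)) w = 0}
      = {w : ℝ × V | ∃ t : ℝ, w = (t, 0)} := by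
  obtain ⟨-, -, L, -, -, -, -, hF, hLw⟩ := emb_deriv ((0 : ℝ), (0 : V))
  ext w
  simp only [Set.mem_setOf_eq, hF.fderiv, hLw, Prod.ext_iff, Prod.fst_zero, Prod.snd_zero]
  norm_num



/-- The Legendrian embryo model
`x₁ = u³ + 3u‖v‖²`, `(x₂,…,xₙ) = v`, `y₁ = (1/3)(u² + ‖v‖²)`,
`(y₂,…,yₙ) = 2u(‖v‖² − (1/3)u²)·v`, `z = u⁵/5 + (2/3)u³‖v‖² + u‖v‖⁴` (with `n ≥ 2`) is
injective, satisfies the Legendrian condition `Dz(p) = Σᵢ yᵢ(p)·Dxᵢ(p)` at every point, is an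
immersion away from the origin, and at the origin the kernel of the derivative is exactly
`ℝ·(1, 0)` (the `∂_u`-direction), so the embryo is an isolated singular point at which the
derivative has rank `n − 1`. -/
theorem stmt_9 (n : ℕ) (hn : 2 ≤ n) :
    let V := EuclideanSpace ℝ (Fin (n - 1))
    let x1 : ℝ × V → ℝ := fun p => p.1 ^ 3 + 3 * p.1 * ‖p.2‖ ^ 2
    let y1 : ℝ × V → ℝ := fun p => (1 / 3) * (p.1 ^ 2 + ‖p.2‖ ^ 2)
    let yr : ℝ × V → V := fun p => (2 * p.1 * (‖p.2‖ ^ 2 - (1 / 3) * p.1 ^ 2)) • p.2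
    let z : ℝ × V → ℝ := fun p =>
      p.1 ^ 5 / 5 + 2 / 3 * p.1 ^ 3 * ‖p.2‖ ^ 2 + p.1 * ‖p.2‖ ^ 4
    let F : ℝ × V → (ℝ × V) × (ℝ × V) × ℝ := fun p => ((x1 p, p.2), (y1 p, yr p), z p)
    Function.Injective F ∧
    (∀ p w : ℝ × V,
        fderiv ℝ z p w = y1 p * fderiv ℝ x1 p w + (inner ℝ (yr p) w.2 : ℝ)) ∧
    (∀ p : ℝ × V, p ≠ ((0 : ℝ), (0 : V)) → Function.Injective ⇑(fderiv ℝ F p)) ∧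
    {w : ℝ × V | fderiv ℝ F ((0 : ℝ), (0 : V)) w = 0}
      = {w : ℝ × V | ∃ t : ℝ, w = (t, 0)} := by
  intro V x1 y1 yr z F
  exact ⟨emb_inj, emb_leg, emb_imm, emb_ker⟩
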